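/- arXiv:1802.05374 — 2 statements merged into one kernel-verified Lean document; each statement's English description precedes it below -/
import Mathlib

section
/- If F: R^d → R is continuously differentiable with L-Lipschitz gradient, H is a symmetric positive semidefinite matrix, g is a random vector with E[g] = ∇F(x), and x⁺ = x - αHg, then E[F(x⁺)] ≤ F(x) - α ∇F(x)ᵀ H^{1/2} (I - (Lα/2)(1 + E[‖Hg - H∇F(x)‖²]/‖H∇F(x)‖²) H) H^{1/2} ∇F(x), provided H∇F(x) ≠ 0. -/
open MeasureTheory
open scoped RealInnerProductSpace

lemma descent_lemma {E : Type*} [NormedAddCommGroup E] [InnerProductSpace ℝ E]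
    [CompleteSpace E] (F : E → ℝ) (L : ℝ) (hL : 0 ≤ L) (hF : ContDiff ℝ 1 F)
    (hLip : ∀ y z, ‖gradient F y - gradient F z‖ ≤ L * ‖y - z‖)
    (x v : E) : F (x + v) ≤ F x + ⟪gradient F x, v⟫ + L / 2 * ‖v‖ ^ 2 := by
  have hdiff : ∀ y, DifferentiableAt ℝ F y := fun y => (hF.differentiable one_ne_zero) y
  have key : ∀ t : ℝ, HasDerivAt (fun t : ℝ => F (x + t • v))
      ⟪gradient F (x + t • v), v⟫ t := by
    intro t
    have hline : HasDerivAt (fun t : ℝ => x + t • v) v t := by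
      simpa using ((hasDerivAt_id t).smul_const v).const_add x
    have hg := (hdiff (x + t • v)).hasGradientAt
    have hfd := hg.hasFDerivAt
    have := hfd.comp_hasDerivAt t hline
    simpa [InnerProductSpace.toDual_apply_apply, Function.comp_def] using this
  have hlipgrad : LipschitzWith (Real.toNNReal L) (gradient F) := by
    apply LipschitzWith.of_dist_le_mul
    intro y z
    rw [dist_eq_norm, dist_eq_norm]
    calc ‖gradient F y - gradient F z‖ ≤ L * ‖y - z‖ := hLip y z
    _ ≤ (Real.toNNReal L) * ‖y - z‖ := by
        apply mul_le_mul_of_nonneg_right _ (norm_nonneg _)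
        exact Real.le_coe_toNNReal L
  have hcont : Continuous fun t : ℝ => ⟪gradient F (x + t • v), v⟫ := by
    apply Continuous.inner _ continuous_const
    exact hlipgrad.continuous.comp (by continuity)
  have heq : F (x + v) - F x = ∫ t in (0:ℝ)..1, ⟪gradient F (x + t • v), v⟫ := by
    have := intervalIntegral.integral_eq_sub_of_hasDerivAt
      (f := fun t : ℝ => F (x + t • v)) (a := (0:ℝ)) (b := 1)
      (fun t _ => key t) (hcont.intervalIntegrable 0 1)
    simpa using this.symm
  have hbound : ∫ t in (0:ℝ)..1, ⟪gradient F (x + t • v), v⟫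
      ≤ ∫ t in (0:ℝ)..1, (⟪gradient F x, v⟫ + L * t * ‖v‖ ^ 2) := by
    apply intervalIntegral.integral_mono_on zero_le_one
      (hcont.intervalIntegrable 0 1)
      (by apply Continuous.intervalIntegrable; continuity)
    intro t ht
    rw [Set.mem_Icc] at ht
    have h1 : ⟪gradient F (x + t • v), v⟫ - ⟪gradient F x, v⟫
        = ⟪gradient F (x + t • v) - gradient F x, v⟫ := by
      rw [inner_sub_left]
    have h2 : ⟪gradient F (x + t • v) - gradient F x, v⟫ ≤ L * t * ‖v‖ ^ 2 := by
      calc ⟪gradient F (x + t • v) - gradient F x, v⟫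
          ≤ ‖gradient F (x + t • v) - gradient F x‖ * ‖v‖ := real_inner_le_norm _ _
        _ ≤ (L * ‖(x + t • v) - x‖) * ‖v‖ := by
            exact mul_le_mul_of_nonneg_right (hLip _ _) (norm_nonneg _)
        _ = L * t * ‖v‖ ^ 2 := by
            rw [add_sub_cancel_left, norm_smul, Real.norm_eq_abs, abs_of_nonneg ht.1]
            ring
    linarith
  have hval : ∫ t in (0:ℝ)..1, (⟪gradient F x, v⟫ + L * t * ‖v‖ ^ 2)
      = ⟪gradient F x, v⟫ + L / 2 * ‖v‖ ^ 2 := by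
    rw [intervalIntegral.integral_add (intervalIntegrable_const)
      (by apply Continuous.intervalIntegrable; continuity)]
    have : ∫ t in (0:ℝ)..1, L * t * ‖v‖ ^ 2 = L / 2 * ‖v‖ ^ 2 := by
      have : (fun t : ℝ => L * t * ‖v‖ ^ 2) = fun t : ℝ => (L * ‖v‖ ^ 2) * t := by
        funext t; ring
      rw [this, intervalIntegral.integral_const_mul, integral_id]
      ring
    rw [this]
    simp
  linarith [heq, hbound, hval]

/-- Expected-decrease inequality for a stochastic quasi-Newton step:
if `∇F` is `L`-Lipschitz, `H` is symmetric PSD with PSD square root `R` (`R ∘ R = H`),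
`g` is a square-integrable random vector with `E[g] = ∇F(x)`, and `x⁺ = x - α H g`, then
`E[F(x⁺)] ≤ F(x) - α ⟪R ∇F(x), (I - (Lα/2)(1 + E[‖Hg - H∇F(x)‖²]/‖H∇F(x)‖²) H) R ∇F(x)⟫`. -/
theorem expected_decrease_stochastic_quasiNewton
    {d : ℕ} {Ω : Type*} [MeasurableSpace Ω] (μ : Measure Ω) [IsProbabilityMeasure μ]
    (F : EuclideanSpace ℝ (Fin d) → ℝ) (L α : ℝ) (hL : 0 < L) (hα : 0 < α)
    (hF : ContDiff ℝ 1 F)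
    (hLip : ∀ y z, ‖gradient F y - gradient F z‖ ≤ L * ‖y - z‖)
    (H R : EuclideanSpace ℝ (Fin d) →ₗ[ℝ] EuclideanSpace ℝ (Fin d))
    (hHsymm : ∀ u w, ⟪H u, w⟫ = ⟪u, H w⟫)
    (hHpsd : ∀ u, 0 ≤ ⟪H u, u⟫)
    (hRsymm : ∀ u w, ⟪R u, w⟫ = ⟪u, R w⟫)
    (hRpsd : ∀ u, 0 ≤ ⟪R u, u⟫)
    (hRsq : ∀ u, R (R u) = H u)
    (x : EuclideanSpace ℝ (Fin d))
    (g : Ω → EuclideanSpace ℝ (Fin d)) (hg2 : MemLp g 2 μ)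
    (hmean : ∫ ω, g ω ∂μ = gradient F x)
    (hne : H (gradient F x) ≠ 0)
    (hint : Integrable (fun ω => F (x - α • H (g ω))) μ) :
    ∫ ω, F (x - α • H (g ω)) ∂μ
      ≤ F x - α * ⟪R (gradient F x),
          R (gradient F x)
            - (L * α / 2 *
                (1 + (∫ ω, ‖H (g ω) - H (gradient F x)‖ ^ 2 ∂μ)
                      / ‖H (gradient F x)‖ ^ 2)) • H (R (gradient F x))⟫ := by
  set v := gradient F x with hv
  set b := H v with hb
  set Hc : EuclideanSpace ℝ (Fin d) →L[ℝ] EuclideanSpace ℝ (Fin d) :=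
    LinearMap.toContinuousLinearMap H with hHc
  have hHcfun : ∀ u, Hc u = H u := fun u => rfl
  have hgint : Integrable g μ := hg2.integrable one_le_two
  have hHg2 : MemLp (fun ω => H (g ω)) 2 μ := by
    have := Hc.comp_memLp' hg2
    exact this
  have hHgint : Integrable (fun ω => H (g ω)) μ := hHg2.integrable one_le_two
  have hHgmean : ∫ ω, H (g ω) ∂μ = b := by
    have := Hc.integral_comp_comm hgint
    simpa [hHcfun, hmean] using this
  have hdev2 : MemLp (fun ω => H (g ω) - b) 2 μ := hHg2.sub (memLp_const b)
  have hdevint : Integrable (fun ω => H (g ω) - b) μ := hdev2.integrable one_le_two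
  have hdevmean : ∫ ω, (H (g ω) - b) ∂μ = 0 := by
    rw [integral_sub hHgint (integrable_const b), hHgmean, integral_const]
    simp
  have hdevsq_int : Integrable (fun ω => ‖H (g ω) - b‖ ^ 2) μ :=
    (memLp_two_iff_integrable_sq_norm hdev2.aestronglyMeasurable).mp hdev2
  have hHgsq_int : Integrable (fun ω => ‖H (g ω)‖ ^ 2) μ :=
    (memLp_two_iff_integrable_sq_norm hHg2.aestronglyMeasurable).mp hHg2
  set σ2 : ℝ := ∫ ω, ‖H (g ω) - b‖ ^ 2 ∂μ with hσ2
  -- second moment expansion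
  have hsecond : ∫ ω, ‖H (g ω)‖ ^ 2 ∂μ = σ2 + ‖b‖ ^ 2 := by
    have hpt : ∀ ω, ‖H (g ω)‖ ^ 2
        = ‖H (g ω) - b‖ ^ 2 + 2 * ⟪b, H (g ω) - b⟫ + ‖b‖ ^ 2 := by
      intro ω
      have h := norm_add_sq_real (H (g ω) - b) b
      have hsum : H (g ω) - b + b = H (g ω) := by abel
      rw [hsum] at h
      rw [h, real_inner_comm]
    calc ∫ ω, ‖H (g ω)‖ ^ 2 ∂μ
        = ∫ ω, (‖H (g ω) - b‖ ^ 2 + 2 * ⟪b, H (g ω) - b⟫ + ‖b‖ ^ 2) ∂μ := by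
          exact integral_congr_ae (Filter.Eventually.of_forall hpt)
      _ = σ2 + 2 * ∫ ω, ⟪b, H (g ω) - b⟫ ∂μ + ‖b‖ ^ 2 := by
          have h1 : Integrable (fun ω => 2 * ⟪b, H (g ω) - b⟫) μ :=
            (hdevint.const_inner b).const_mul 2
          have h2 : Integrable (fun ω => ‖H (g ω) - b‖ ^ 2 + 2 * ⟪b, H (g ω) - b⟫) μ :=
            hdevsq_int.add h1
          rw [integral_add h2 (integrable_const _), integral_add hdevsq_int h1,
            integral_const, integral_const_mul]
          simp
          rfl
      _ = σ2 + ‖b‖ ^ 2 := by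
          rw [integral_inner hdevint b, hdevmean, inner_zero_right]
          ring
  -- pointwise descent
  have hdesc : ∀ ω, F (x - α • H (g ω))
      ≤ F x - α * ⟪v, H (g ω)⟫ + L / 2 * α ^ 2 * ‖H (g ω)‖ ^ 2 := by
    intro ω
    have := descent_lemma F L hL.le hF hLip x (-(α • H (g ω)))
    have h1 : x + -(α • H (g ω)) = x - α • H (g ω) := by abel
    rw [h1] at this
    have h2 : ⟪v, -(α • H (g ω))⟫ = -(α * ⟪v, H (g ω)⟫) := by
      rw [inner_neg_right, real_inner_smul_right]
    have h3 : ‖-(α • H (g ω))‖ ^ 2 = α ^ 2 * ‖H (g ω)‖ ^ 2 := by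
      rw [norm_neg, norm_smul, Real.norm_eq_abs, abs_of_pos hα, mul_pow]
    rw [h2, h3] at this
    linarith
  have hinnerint : Integrable (fun ω => ⟪v, H (g ω)⟫) μ := hHgint.const_inner v
  have hRHSint : Integrable
      (fun ω => F x - α * ⟪v, H (g ω)⟫ + L / 2 * α ^ 2 * ‖H (g ω)‖ ^ 2) μ :=
    ((integrable_const _).sub (hinnerint.const_mul α)).add (hHgsq_int.const_mul _)
  have hmono : ∫ ω, F (x - α • H (g ω)) ∂μ
      ≤ ∫ ω, (F x - α * ⟪v, H (g ω)⟫ + L / 2 * α ^ 2 * ‖H (g ω)‖ ^ 2) ∂μ :=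
    integral_mono hint hRHSint hdesc
  have hcalc : ∫ ω, (F x - α * ⟪v, H (g ω)⟫ + L / 2 * α ^ 2 * ‖H (g ω)‖ ^ 2) ∂μ
      = F x - α * ⟪v, b⟫ + L / 2 * α ^ 2 * (σ2 + ‖b‖ ^ 2) := by
    have h1 : Integrable (fun ω => α * ⟪v, H (g ω)⟫) μ := hinnerint.const_mul α
    have h2 : Integrable (fun ω => F x - α * ⟪v, H (g ω)⟫) μ :=
      (integrable_const _).sub h1
    have h3 : Integrable (fun ω => L / 2 * α ^ 2 * ‖H (g ω)‖ ^ 2) μ :=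
      hHgsq_int.const_mul _
    rw [integral_add h2 h3, integral_sub (integrable_const _) h1,
      integral_const, integral_const_mul, integral_inner hHgint v,
      hHgmean, integral_const_mul, hsecond]
    simp
  -- rewrite goal RHS
  have hbne : ‖b‖ ^ 2 ≠ 0 := pow_ne_zero 2 (norm_ne_zero_iff.mpr hne)
  have hRv1 : ⟪R v, R v⟫ = ⟪v, b⟫ := by
    calc ⟪R v, R v⟫ = ⟪v, R (R v)⟫ := hRsymm v (R v)
      _ = ⟪v, b⟫ := by rw [hRsq v, ← hb]
  have hRv2 : ⟪R v, H (R v)⟫ = ‖b‖ ^ 2 := by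
    calc ⟪R v, H (R v)⟫ = ⟪R v, R (R (R v))⟫ :=
          congrArg (fun w => ⟪R v, w⟫) (hRsq (R v)).symm
      _ = ⟪R (R v), R (R v)⟫ := (hRsymm (R v) (R (R v))).symm
      _ = ⟪b, b⟫ := by rw [hRsq v, ← hb]
      _ = ‖b‖ ^ 2 := real_inner_self_eq_norm_sq b
  have hRHS : F x - α * ⟪R v, R v - (L * α / 2 * (1 + σ2 / ‖b‖ ^ 2)) • H (R v)⟫
      = F x - α * ⟪v, b⟫ + L / 2 * α ^ 2 * (σ2 + ‖b‖ ^ 2) := by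
    rw [inner_sub_right, real_inner_smul_right, hRv1, hRv2]
    field_simp
    ring
  rw [hRHS]
  exact le_trans hmono (le_of_eq hcalc)
end

section
/- Under the hypotheses of the previous statement (descent in conditional expectation with factor (α/2)‖H_k^{1/2}∇F(x_k)‖², eigenvalue bounds Λ₁I ⪯ H_k ⪯ Λ₂I, and F bounded below), the series Σ_{k=0}^∞ E[‖∇F(x_k)‖²] converges; in particular lim_{k→∞} E[‖∇F(x_k)‖²] = 0. -/
open MeasureTheory
open scoped RealInnerProductSpace

/-- Under the conditional expected-decrease condition with eigenvalue bounds on `H_k`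
and `F` bounded below, the series `Σ_k E[‖∇F(x_k)‖²]` converges; in particular
`E[‖∇F(x_k)‖²] → 0`. -/
theorem gradient_norms_summable_nonconvex
    {d : ℕ} {Ω : Type*} {m0 : MeasurableSpace Ω} (μ : Measure Ω) [IsProbabilityMeasure μ]
    (𝓕 : Filtration ℕ m0) [∀ k, SigmaFinite (μ.trim (𝓕.le k))]
    (F : EuclideanSpace ℝ (Fin d) → ℝ) (Fmin Λ₁ Λ₂ α : ℝ)
    (hΛ₁ : 0 < Λ₁) (hΛ : Λ₁ ≤ Λ₂) (hα : 0 < α)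
    (hF : ContDiff ℝ 2 F) (hbdd : ∀ y, Fmin ≤ F y)
    (x : ℕ → Ω → EuclideanSpace ℝ (Fin d)) (hadapted : Adapted 𝓕 x)
    (x0 : EuclideanSpace ℝ (Fin d)) (hx0 : ∀ ω, x 0 ω = x0)
    (H Hhalf : ℕ → Ω → (EuclideanSpace ℝ (Fin d) →ₗ[ℝ] EuclideanSpace ℝ (Fin d)))
    (hHsymm : ∀ k ω u w, ⟪H k ω u, w⟫ = ⟪u, H k ω w⟫)
    (hHeig : ∀ k ω u, Λ₁ * ‖u‖ ^ 2 ≤ ⟪H k ω u, u⟫ ∧ ⟪H k ω u, u⟫ ≤ Λ₂ * ‖u‖ ^ 2)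
    (hHhalfsymm : ∀ k ω u w, ⟪Hhalf k ω u, w⟫ = ⟪u, Hhalf k ω w⟫)
    (hHhalfsq : ∀ k ω u, Hhalf k ω (Hhalf k ω u) = H k ω u)
    (hint : ∀ k, Integrable (fun ω => F (x k ω)) μ)
    (hint2 : ∀ k, Integrable (fun ω => ‖gradient F (x k ω)‖ ^ 2) μ)
    (hdesc : ∀ k, μ[(fun ω => F (x (k + 1) ω)) | 𝓕 k]
      ≤ᵐ[μ] fun ω => F (x k ω) - α / 2 * ‖Hhalf k ω (gradient F (x k ω))‖ ^ 2) :
    Summable (fun k => ∫ ω, ‖gradient F (x k ω)‖ ^ 2 ∂μ) ∧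
      Filter.Tendsto (fun k => ∫ ω, ‖gradient F (x k ω)‖ ^ 2 ∂μ)
        Filter.atTop (nhds 0) := by
  set c : ℝ := α * Λ₁ / 2 with hc
  have hcpos : 0 < c := by positivity
  set b : ℕ → ℝ := fun k => ∫ ω, ‖gradient F (x k ω)‖ ^ 2 ∂μ with hb
  set a : ℕ → ℝ := fun k => ∫ ω, F (x k ω) ∂μ with ha
  have hbnn : ∀ k, 0 ≤ b k := fun k => integral_nonneg fun ω => by positivity
  -- pointwise: Λ₁ ‖u‖² ≤ ‖Hhalf u‖²
  have hpt : ∀ k ω (u : EuclideanSpace ℝ (Fin d)),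
      Λ₁ * ‖u‖ ^ 2 ≤ ‖Hhalf k ω u‖ ^ 2 := by
    intro k ω u
    have h1 : ‖Hhalf k ω u‖ ^ 2 = ⟪Hhalf k ω u, Hhalf k ω u⟫ :=
      (real_inner_self_eq_norm_sq _).symm
    rw [h1, hHhalfsymm, hHhalfsq, real_inner_comm]
    exact (hHeig k ω u).1
  have hstep : ∀ k, a (k + 1) ≤ a k - c * b k := by
    intro k
    have h1 : a (k + 1) = ∫ ω, (μ[(fun ω => F (x (k + 1) ω)) | 𝓕 k]) ω ∂μ :=
      (integral_condExp (𝓕.le k)).symm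
    have h2 : (μ[(fun ω => F (x (k + 1) ω)) | 𝓕 k])
        ≤ᵐ[μ] fun ω => F (x k ω) - c * ‖gradient F (x k ω)‖ ^ 2 := by
      filter_upwards [hdesc k] with ω hω
      refine hω.trans ?_
      have := hpt k ω (gradient F (x k ω))
      have hα2 : (0:ℝ) < α / 2 := by positivity
      nlinarith [this]
    have h3 : ∫ ω, (μ[(fun ω => F (x (k + 1) ω)) | 𝓕 k]) ω ∂μ
        ≤ ∫ ω, (F (x k ω) - c * ‖gradient F (x k ω)‖ ^ 2) ∂μ :=
      integral_mono_ae integrable_condExp ((hint k).sub ((hint2 k).const_mul c)) h2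
    have h4 : ∫ ω, (F (x k ω) - c * ‖gradient F (x k ω)‖ ^ 2) ∂μ
        = a k - c * b k := by
      rw [integral_sub (hint k) ((hint2 k).const_mul c), integral_const_mul]
    rw [h1, ← h4]; exact h3
  have hamin : ∀ k, Fmin ≤ a k := by
    intro k
    have : ∫ (_ : Ω), Fmin ∂μ ≤ a k :=
      integral_mono (integrable_const Fmin) (hint k) fun ω => hbdd _
    simpa using this
  have hsum : ∀ n, ∑ k ∈ Finset.range n, c * b k ≤ a 0 - Fmin := by
    intro n
    have : ∀ n, ∑ k ∈ Finset.range n, c * b k ≤ a 0 - a n := by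
      intro n
      induction n with
      | zero => simp
      | succ n ih =>
        rw [Finset.sum_range_succ]
        have := hstep n
        linarith
    linarith [this n, hamin n]
  have hS : Summable fun k => c * b k :=
    summable_of_sum_range_le (fun k => by positivity) hsum
  have hSb : Summable b := by
    have := hS.mul_left c⁻¹
    refine this.congr fun k => ?_
    rw [← mul_assoc, inv_mul_cancel₀ hcpos.ne', one_mul]
  exact ⟨hSb, hSb.tendsto_atTop_zero⟩
end
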